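/- arXiv:2008.01130 — 6 statements merged into one kernel-verified Lean document; each statement's English description precedes it below -/
import Mathlib

section
/- Let $X_\theta$ have a Gamma$(\theta, 1)$ distribution with shape $\theta > 0$. Then for every $x > 0$: $P(X_\theta > \theta + \sqrt{2\theta x} + x) \le e^{-x}$ and $P(X_\theta < \theta - \sqrt{2\theta x}) \le e^{-x}$. -/
open MeasureTheory ProbabilityTheory Real

/-- `2(1+w)·log(1+w) ≤ 2w + w²` for `w ≥ 0`. -/
lemma aux_log_upper (w : ℝ) (hw : 0 ≤ w) :
    2 * (1 + w) * Real.log (1 + w) ≤ 2 * w + w ^ 2 := by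
  set g : ℝ → ℝ := fun v => 2 * v + v ^ 2 - 2 * (1 + v) * Real.log (1 + v) with hgdef
  have hderiv : ∀ v : ℝ, 0 < 1 + v →
      HasDerivAt g (2 * v - 2 * Real.log (1 + v)) v := by
    intro v hv
    have h1 : HasDerivAt (fun v : ℝ => 1 + v) 1 v := (hasDerivAt_id v).const_add 1
    have hlog : HasDerivAt (fun v : ℝ => Real.log (1 + v)) (1 / (1 + v)) v := h1.log hv.ne'
    have hprod : HasDerivAt (fun v : ℝ => (1 + v) * Real.log (1 + v))
        (1 * Real.log (1 + v) + (1 + v) * (1 / (1 + v))) v := h1.mul hlog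
    have h2 : HasDerivAt (fun v : ℝ => 2 * v + v ^ 2) (2 * 1 + ↑2 * v ^ 1) v :=
      ((hasDerivAt_id v).const_mul 2).add (hasDerivAt_pow 2 v)
    have h3 := h2.sub (hprod.const_mul 2)
    have h4 : HasDerivAt g _ v := h3.congr_of_eventuallyEq
      (Filter.Eventually.of_forall fun y => by simp only [hgdef, Pi.sub_apply]; ring)
    convert h4 using 1
    · rw [mul_one_div_cancel hv.ne']
      ring
  have hmono : MonotoneOn g (Set.Ici 0) := by
    apply monotoneOn_of_deriv_nonneg (convex_Ici 0)
    · intro v hv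
      exact ((hderiv v (by simp at hv; linarith)).differentiableAt.continuousAt).continuousWithinAt
    · intro v hv
      rw [interior_Ici] at hv
      exact (hderiv v (by simp at hv; linarith)).differentiableAt.differentiableWithinAt
    · intro v hv
      rw [interior_Ici] at hv
      simp only [Set.mem_Ioi] at hv
      rw [(hderiv v (by linarith)).deriv]
      have : Real.log (1 + v) ≤ v := by
        have := Real.log_le_sub_one_of_pos (show (0:ℝ) < 1 + v by linarith)
        linarith
      linarith
  have h0 : g 0 = 0 := by simp [hgdef]
  have := hmono (Set.self_mem_Ici) (Set.mem_Ici.mpr hw) hw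
  rw [h0] at this
  simp only [hgdef] at this
  linarith

/-- `v - v²/2 ≤ log(1+v)` for `v ≥ 0`. -/
lemma aux_log_lower (v : ℝ) (hv : 0 ≤ v) :
    v - v ^ 2 / 2 ≤ Real.log (1 + v) := by
  set g : ℝ → ℝ := fun v => Real.log (1 + v) - v + v ^ 2 / 2 with hgdef
  have hderiv : ∀ v : ℝ, 0 < 1 + v →
      HasDerivAt g (1 / (1 + v) - 1 + v) v := by
    intro v hv
    have h1 : HasDerivAt (fun v : ℝ => 1 + v) 1 v := (hasDerivAt_id v).const_add 1
    have hlog : HasDerivAt (fun v : ℝ => Real.log (1 + v)) (1 / (1 + v)) v := h1.log hv.ne'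
    have h2 : HasDerivAt (fun v : ℝ => v ^ 2 / 2) v v := by
      simpa using (hasDerivAt_pow 2 v).div_const 2
    exact (hlog.sub (hasDerivAt_id v)).add h2
  have hmono : MonotoneOn g (Set.Ici 0) := by
    apply monotoneOn_of_deriv_nonneg (convex_Ici 0)
    · intro u hu
      exact ((hderiv u (by simp at hu; linarith)).differentiableAt.continuousAt).continuousWithinAt
    · intro u hu
      rw [interior_Ici] at hu
      exact (hderiv u (by simp at hu; linarith)).differentiableAt.differentiableWithinAt
    · intro u hu
      rw [interior_Ici] at hu
      simp only [Set.mem_Ioi] at hu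
      rw [(hderiv u (by linarith)).deriv]
      have he : 1 / (1 + u) - 1 + u = u ^ 2 / (1 + u) := by
        field_simp
        ring
      rw [he]
      positivity
  have h0 : g 0 = 0 := by simp [hgdef]
  have := hmono (Set.self_mem_Ici) (Set.mem_Ici.mpr hv) hv
  rw [h0] at this
  simp only [hgdef] at this
  linarith

/-- Chernoff bound for the Gamma(θ,1) measure. -/
lemma gamma_chernoff (θ t a : ℝ) (hθ : 0 < θ) (ht : t < 1) (S : Set ℝ)
    (hS : MeasurableSet S) (hta : ∀ u ∈ S, 0 ≤ t * (u - a)) :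
    gammaMeasure θ 1 S ≤ ENNReal.ofReal (Real.exp (-(t * a)) * (1 - t) ^ (-θ)) := by
  have h1t : 0 < 1 - t := by linarith
  have key : ∀ u : ℝ, ENNReal.ofReal (Real.exp (t * (u - a))) * gammaPDF θ 1 u
      = ENNReal.ofReal (Real.exp (-(t * a)) * (1 - t) ^ (-θ)) * gammaPDF θ (1 - t) u := by
    intro u
    rcases lt_or_ge u 0 with hu | hu
    · rw [gammaPDF_of_neg hu, gammaPDF_of_neg hu, mul_zero, mul_zero]
    · rw [gammaPDF_of_nonneg hu, gammaPDF_of_nonneg hu,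
        ← ENNReal.ofReal_mul (Real.exp_nonneg _),
        ← ENNReal.ofReal_mul (by positivity)]
      congr 1
      have e1 : ((1:ℝ)) ^ θ = 1 := Real.one_rpow θ
      have e2 : ((1 - t) ^ (-θ) : ℝ) * (1 - t) ^ θ = 1 := by
        rw [← Real.rpow_add h1t]
        simp
      have e3 : Real.exp (t * (u - a)) * Real.exp (-(1 * u))
          = Real.exp (-(t * a)) * Real.exp (-((1 - t) * u)) := by
        rw [← Real.exp_add, ← Real.exp_add]
        ring_nf
      rw [e1]
      linear_combination (u ^ (θ - 1) / Real.Gamma θ) * e3 -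
        (Real.exp (-(t * a)) * Real.exp (-((1 - t) * u)) * u ^ (θ - 1) / Real.Gamma θ) * e2
  have hmeas : Measurable fun u : ℝ =>
      ENNReal.ofReal (Real.exp (t * (u - a))) * gammaPDF θ 1 u := by
    apply Measurable.fun_mul
    · exact (Real.measurable_exp.comp
        ((measurable_id.sub measurable_const).const_mul t)).ennreal_ofReal
    · exact (measurable_gammaPDFReal θ 1).ennreal_ofReal
  rw [gammaMeasure, withDensity_apply _ hS]
  calc ∫⁻ u in S, gammaPDF θ 1 u
      ≤ ∫⁻ u in S, ENNReal.ofReal (Real.exp (t * (u - a))) * gammaPDF θ 1 u := by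
        apply setLIntegral_mono hmeas
        intro u hu
        conv_lhs => rw [← one_mul (gammaPDF θ 1 u)]
        apply mul_le_mul_left
        rw [← ENNReal.ofReal_one]
        apply ENNReal.ofReal_le_ofReal
        calc (1:ℝ) = Real.exp 0 := Real.exp_zero.symm
          _ ≤ Real.exp (t * (u - a)) := Real.exp_le_exp.mpr (hta u hu)
    _ ≤ ∫⁻ u, ENNReal.ofReal (Real.exp (t * (u - a))) * gammaPDF θ 1 u :=
        setLIntegral_le_lintegral _ _
    _ = ∫⁻ u, ENNReal.ofReal (Real.exp (-(t * a)) * (1 - t) ^ (-θ)) * gammaPDF θ (1 - t) u :=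
        lintegral_congr key
    _ = ENNReal.ofReal (Real.exp (-(t * a)) * (1 - t) ^ (-θ)) := by
        have hm2 : Measurable (gammaPDF θ (1 - t)) :=
          (measurable_gammaPDFReal θ (1 - t)).ennreal_ofReal
        rw [lintegral_const_mul _ hm2, lintegral_gammaPDF_eq_one hθ h1t, mul_one]

/-- Exponential tail inequalities for the Gamma(θ,1) distribution:
`P(X > θ + √(2θx) + x) ≤ e^{-x}` and `P(X < θ - √(2θx)) ≤ e^{-x}` for all `x > 0`. -/
theorem gamma_tail_bounds (θ : ℝ) (hθ : 0 < θ) (x : ℝ) (hx : 0 < x) :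
    gammaMeasure θ 1 {u : ℝ | θ + Real.sqrt (2 * θ * x) + x < u}
        ≤ ENNReal.ofReal (Real.exp (-x)) ∧
    gammaMeasure θ 1 {u : ℝ | u < θ - Real.sqrt (2 * θ * x)}
        ≤ ENNReal.ofReal (Real.exp (-x)) := by
  set z := Real.sqrt (2 * θ * x) with hzdef
  have hz : 0 < z := Real.sqrt_pos.mpr (by positivity)
  have hz2 : z ^ 2 = 2 * θ * x := Real.sq_sqrt (by positivity)
  have hw : 0 < 1 + z / θ := by positivity
  have hzθ : 0 < z + θ := by linarith
  set L := Real.log (1 + z / θ) with hLdef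
  constructor
  · -- upper tail
    have hchern := gamma_chernoff θ (z / (z + θ)) (θ + z + x) hθ
      (by rw [div_lt_one hzθ]; linarith)
      {u : ℝ | θ + z + x < u} measurableSet_Ioi
      (fun u hu => mul_nonneg (by positivity)
        (by simp only [Set.mem_setOf_eq] at hu; linarith))
    refine hchern.trans (ENNReal.ofReal_le_ofReal ?_)
    have h1t : (1:ℝ) - z / (z + θ) = (1 + z / θ)⁻¹ := by
      rw [show (1:ℝ) + z / θ = (z + θ) / θ by field_simp; ring, inv_div]
      field_simp
      ring
    rw [h1t, Real.rpow_def_of_pos (by positivity), Real.log_inv, ← Real.exp_add,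
      Real.exp_le_exp]
    -- goal: -(z/(z+θ) * (θ+z+x)) + -L * -θ ≤ -x
    have hL := aux_log_upper (z / θ) (by positivity)
    have hL' : 2 * (z + θ) * θ * L ≤ 2 * z * θ + z ^ 2 := by
      have h := mul_le_mul_of_nonneg_left hL (le_of_lt (mul_pos hθ hθ))
      calc 2 * (z + θ) * θ * L = θ * θ * (2 * (1 + z / θ) * L) := by
            field_simp
            ring
        _ ≤ θ * θ * (2 * (z / θ) + (z / θ) ^ 2) := h
        _ = 2 * z * θ + z ^ 2 := by
            field_simp
    have hkey : θ * L ≤ θ * (z + x) / (z + θ) := by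
      rw [le_div_iff₀ hzθ]
      nlinarith [hL', hz2]
    have heq : -(z / (z + θ) * (θ + z + x)) + θ * (z + x) / (z + θ) = -x := by
      field_simp
      linear_combination (-1 : ℝ) * hz2
    nlinarith [hkey, heq]
  · -- lower tail
    have hchern := gamma_chernoff θ (-(z / θ)) (θ - z) hθ
      (by nlinarith [div_pos hz hθ])
      {u : ℝ | u < θ - z} measurableSet_Iio
      (fun u hu => by
        simp only [Set.mem_setOf_eq] at hu
        have h := mul_nonneg (div_pos hz hθ).le (by linarith : (0:ℝ) ≤ (θ - z) - u)
        nlinarith [h])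
    refine hchern.trans (ENNReal.ofReal_le_ofReal ?_)
    have h1t : (1:ℝ) - -(z / θ) = 1 + z / θ := by ring
    rw [h1t, Real.rpow_def_of_pos hw, ← Real.exp_add, Real.exp_le_exp]
    -- goal: -(-(z/θ) * (θ - z)) + L * -θ ≤ -x
    have hLB := aux_log_lower (z / θ) (by positivity)
    have hmul := mul_le_mul_of_nonneg_left hLB hθ.le
    have he : θ * (z / θ - (z / θ) ^ 2 / 2) = z - z ^ 2 / (2 * θ) := by
      field_simp
    have he2 : -(-(z / θ) * (θ - z)) = z - z ^ 2 / θ := by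
      field_simp
    have he3 : z ^ 2 / (2 * θ) = x := by
      rw [hz2]
      field_simp
    have he4 : z ^ 2 / θ = 2 * x := by
      rw [hz2]
      field_simp
    nlinarith [hmul, he, he2, he3, he4]
end

section
/- Let $X \sim \mathrm{Gamma}(a, 1)$ and $Y_n \sim \mathrm{Gamma}(n, 1)$ be independent with $a > 0$ and $n \ge 1$ an integer. Then for all $x > 0$, $P\big(X/(X+Y_n) \ge 12 n^{-1}(a + x)\big) \le 2 e^{-x}$. -/
open MeasureTheory ProbabilityTheory Real

namespace BetaTailAux

open Set

variable {Ω : Type*} [MeasurableSpace Ω] {P : Measure Ω}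

lemma aemeasurable_of_map_gamma {X : Ω → ℝ} {θ : ℝ} (hθ : 0 < θ)
    (hX : Measure.map X P = gammaMeasure θ 1) : AEMeasurable X P := by
  by_contra h
  have h1 : Measure.map X P = 0 := Measure.map_of_not_aemeasurable h
  have hp : IsProbabilityMeasure (gammaMeasure θ 1) := isProbabilityMeasure_gammaMeasure hθ one_pos
  have h2 := congrArg (fun μ : Measure ℝ => μ Set.univ) (h1.symm.trans hX)
  simp [measure_univ] at h2

lemma ae_nonneg_of_map_gamma {X : Ω → ℝ} {θ : ℝ} (hθ : 0 < θ)
    (hX : Measure.map X P = gammaMeasure θ 1) : ∀ᵐ ω ∂P, 0 ≤ X ω := by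
  have hm := aemeasurable_of_map_gamma hθ hX
  have h0 : P (X ⁻¹' Iio 0) = 0 := by
    rw [← Measure.map_apply_of_aemeasurable hm measurableSet_Iio, hX, gammaMeasure,
      withDensity_apply _ measurableSet_Iio, lintegral_gammaPDF_of_nonpos le_rfl]
  have hset : {ω | ¬ 0 ≤ X ω} = X ⁻¹' Iio 0 := by ext ω; simp [not_le]
  rw [ae_iff, hset]
  exact h0

lemma lintegral_exp_gamma {X : Ω → ℝ} {θ s : ℝ} (hθ : 0 < θ) (hs : 0 < s)
    (hX : Measure.map X P = gammaMeasure θ 1) :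
    ∫⁻ ω, ENNReal.ofReal (Real.exp ((1 - s) * X ω)) ∂P = ENNReal.ofReal (s ^ (-θ)) := by
  have hm := aemeasurable_of_map_gamma hθ hX
  have hmeasg : Measurable fun y : ℝ => ENNReal.ofReal (Real.exp ((1 - s) * y)) :=
    ((measurable_id.const_mul _).exp).ennreal_ofReal
  calc ∫⁻ ω, ENNReal.ofReal (Real.exp ((1 - s) * X ω)) ∂P
      = ∫⁻ y, ENNReal.ofReal (Real.exp ((1 - s) * y)) ∂(Measure.map X P) :=
        (lintegral_map' hmeasg.aemeasurable hm).symm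
    _ = ∫⁻ y, gammaPDF θ 1 y * ENNReal.ofReal (Real.exp ((1 - s) * y)) := by
        have hpdfm : Measurable (gammaPDF θ 1) := (measurable_gammaPDFReal θ 1).ennreal_ofReal
        rw [hX, gammaMeasure, lintegral_withDensity_eq_lintegral_mul _ hpdfm hmeasg]
        rfl
    _ = ∫⁻ y, ENNReal.ofReal (s ^ (-θ)) * gammaPDF θ s y := by
        apply lintegral_congr
        intro y
        rcases lt_or_ge y 0 with hy | hy
        · rw [gammaPDF_of_neg hy, gammaPDF_of_neg hy, zero_mul, mul_zero]
        · rw [gammaPDF_of_nonneg hy, gammaPDF_of_nonneg hy,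
            ← ENNReal.ofReal_mul (by positivity), ← ENNReal.ofReal_mul (by positivity)]
          congr 1
          have h1 : Real.exp (-(1 * y)) * Real.exp ((1 - s) * y) = Real.exp (-(s * y)) := by
            rw [← Real.exp_add]; congr 1; ring
          have h2 : s ^ (-θ) * s ^ θ = 1 := by
            rw [← Real.rpow_add hs]; simp
          calc (1:ℝ) ^ θ / Gamma θ * y ^ (θ - 1) * Real.exp (-(1 * y)) * Real.exp ((1 - s) * y)
              = (s ^ (-θ) * s ^ θ) / Gamma θ * y ^ (θ - 1)
                  * (Real.exp (-(1 * y)) * Real.exp ((1 - s) * y)) := by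
                rw [one_rpow, h2]; ring
            _ = s ^ (-θ) * (s ^ θ / Gamma θ * y ^ (θ - 1) * Real.exp (-(s * y))) := by
                rw [h1]; ring
    _ = ENNReal.ofReal (s ^ (-θ)) := by
        have hpdfm : Measurable (gammaPDF θ s) := (measurable_gammaPDFReal θ s).ennreal_ofReal
        rw [lintegral_const_mul _ hpdfm, lintegral_gammaPDF_eq_one hθ hs, mul_one]

lemma gamma_tail_ge {X : Ω → ℝ} {θ : ℝ} (hθ : 0 < θ)
    (hX : Measure.map X P = gammaMeasure θ 1) (u : ℝ) :
    P {ω | u ≤ X ω} ≤ ENNReal.ofReal ((2:ℝ) ^ θ * Real.exp (-(u / 2))) := by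
  have hm := aemeasurable_of_map_gamma hθ hX
  have hint : ∫⁻ ω, ENNReal.ofReal (Real.exp ((1 - 2⁻¹) * X ω)) ∂P
      = ENNReal.ofReal ((2⁻¹ : ℝ) ^ (-θ)) :=
    lintegral_exp_gamma hθ (by norm_num) hX
  have hmk := mul_meas_ge_le_lintegral₀ (μ := P)
      (f := fun ω => ENNReal.ofReal (Real.exp ((1 - 2⁻¹) * X ω)))
      (ENNReal.measurable_ofReal.comp_aemeasurable
        (Real.measurable_exp.comp_aemeasurable (hm.const_mul (1 - 2⁻¹))))
      (ENNReal.ofReal (Real.exp ((1 - 2⁻¹) * u)))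
  rw [hint] at hmk
  have hset : {ω | ENNReal.ofReal (Real.exp ((1 - 2⁻¹) * u))
      ≤ ENNReal.ofReal (Real.exp ((1 - 2⁻¹) * X ω))} = {ω | u ≤ X ω} := by
    ext ω
    rw [Set.mem_setOf_eq, Set.mem_setOf_eq,
      ENNReal.ofReal_le_ofReal_iff (Real.exp_nonneg _), Real.exp_le_exp,
      mul_le_mul_iff_right₀ (by norm_num : (0:ℝ) < 1 - 2⁻¹)]
  rw [hset] at hmk
  have hk0 : ENNReal.ofReal (Real.exp ((1 - 2⁻¹) * u)) ≠ 0 := by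
    simp [Real.exp_pos]
  rw [mul_comm] at hmk
  have := (ENNReal.le_div_iff_mul_le (Or.inl hk0) (Or.inl ENNReal.ofReal_ne_top)).mpr hmk
  refine this.trans ?_
  rw [← ENNReal.ofReal_div_of_pos (Real.exp_pos _)]
  apply ENNReal.ofReal_le_ofReal
  apply le_of_eq
  have h2 : ((2:ℝ)⁻¹) ^ (-θ) = 2 ^ θ := by
    rw [Real.inv_rpow (by norm_num), Real.rpow_neg (by norm_num), inv_inv]
  rw [h2, show ((1:ℝ) - 2⁻¹) * u = u / 2 by ring, Real.exp_neg, div_eq_mul_inv]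

lemma gamma_tail_le {Y : Ω → ℝ} {θ : ℝ} (hθ : 0 < θ)
    (hY : Measure.map Y P = gammaMeasure θ 1) (m : ℝ) :
    P {ω | Y ω ≤ m} ≤ ENNReal.ofReal ((2:ℝ) ^ (-θ) * Real.exp m) := by
  have hm := aemeasurable_of_map_gamma hθ hY
  have hint : ∫⁻ ω, ENNReal.ofReal (Real.exp ((1 - 2) * Y ω)) ∂P
      = ENNReal.ofReal ((2 : ℝ) ^ (-θ)) :=
    lintegral_exp_gamma hθ (by norm_num) hY
  have hmk := mul_meas_ge_le_lintegral₀ (μ := P)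
      (f := fun ω => ENNReal.ofReal (Real.exp ((1 - 2) * Y ω)))
      (ENNReal.measurable_ofReal.comp_aemeasurable
        (Real.measurable_exp.comp_aemeasurable (hm.const_mul (1 - 2))))
      (ENNReal.ofReal (Real.exp ((1 - 2) * m)))
  rw [hint] at hmk
  have hset : {ω | ENNReal.ofReal (Real.exp ((1 - 2) * m))
      ≤ ENNReal.ofReal (Real.exp ((1 - 2) * Y ω))} = {ω | Y ω ≤ m} := by
    ext ω
    rw [Set.mem_setOf_eq, Set.mem_setOf_eq,
      ENNReal.ofReal_le_ofReal_iff (Real.exp_nonneg _), Real.exp_le_exp]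
    constructor
    · intro h; nlinarith
    · intro h; nlinarith
  rw [hset] at hmk
  have hk0 : ENNReal.ofReal (Real.exp ((1 - 2) * m)) ≠ 0 := by
    simp [Real.exp_pos]
  rw [mul_comm] at hmk
  have := (ENNReal.le_div_iff_mul_le (Or.inl hk0) (Or.inl ENNReal.ofReal_ne_top)).mpr hmk
  refine this.trans ?_
  rw [← ENNReal.ofReal_div_of_pos (Real.exp_pos _)]
  apply ENNReal.ofReal_le_ofReal
  apply le_of_eq
  rw [show ((1:ℝ) - 2) * m = -m by ring, Real.exp_neg, div_eq_mul_inv, inv_inv]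

end BetaTailAux

open BetaTailAux

/-- If `X ~ Gamma(a,1)` and `Yₙ ~ Gamma(n,1)` are independent, `a > 0`, `n ≥ 1`, then for all
`x > 0`, `P(X/(X+Yₙ) ≥ 12 n⁻¹ (a + x)) ≤ 2 e^{-x}` (a tail bound for the Beta(a,n) law). -/
theorem beta_tail_bound
    {Ω : Type*} [MeasurableSpace Ω] (P : Measure Ω) [IsProbabilityMeasure P]
    (X Y : Ω → ℝ) (a : ℝ) (ha : 0 < a) (n : ℕ) (hn : 1 ≤ n)
    (hX : Measure.map X P = gammaMeasure a 1)
    (hY : Measure.map Y P = gammaMeasure n 1)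
    (hXY : IndepFun X Y P)
    (x : ℝ) (hx : 0 < x) :
    P {ω | 12 / (n : ℝ) * (a + x) ≤ X ω / (X ω + Y ω)}
      ≤ ENNReal.ofReal (2 * Real.exp (-x)) := by
  have hnpos : (0:ℝ) < n := by exact_mod_cast hn
  have hax : 0 < a + x := by linarith
  have hXnn := ae_nonneg_of_map_gamma ha hX
  have hYnn := ae_nonneg_of_map_gamma hnpos hY
  have ht0 : 0 < 12 / (n:ℝ) * (a + x) := mul_pos (div_pos (by norm_num) hnpos) hax
  by_cases hcase : 1 < 12 / (n:ℝ) * (a + x)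
  · -- threshold exceeds 1: the event is null
    have hz : P {ω | 12 / (n:ℝ) * (a + x) ≤ X ω / (X ω + Y ω)} = 0 := by
      rw [measure_eq_zero_iff_ae_notMem]
      filter_upwards [hXnn, hYnn] with ω hx0 hy0
      simp only [Set.mem_setOf_eq, not_le]
      rcases eq_or_lt_of_le (by linarith : (0:ℝ) ≤ X ω + Y ω) with h | h
      · rw [← h, div_zero]; exact ht0
      · calc X ω / (X ω + Y ω) ≤ 1 := (div_le_one h).mpr (by linarith)
          _ < _ := hcase
    rw [hz]
    exact zero_le
  · push_neg at hcase
    have hn12 : 12 * (a + x) ≤ (n:ℝ) := by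
      rw [div_mul_eq_mul_div, div_le_one hnpos] at hcase
      linarith
    have hsub : P {ω | 12 / (n:ℝ) * (a + x) ≤ X ω / (X ω + Y ω)}
        ≤ P ({ω | 6 * (a + x) ≤ X ω} ∪ {ω | Y ω ≤ (n:ℝ) / 2}) := by
      apply measure_mono_ae
      filter_upwards [hXnn, hYnn] with ω hx0 hy0
      intro hω
      by_cases hYb : Y ω ≤ (n:ℝ) / 2
      · exact Or.inr hYb
      · push_neg at hYb
        left
        have hsum : 0 < X ω + Y ω := by linarith
        have h1 : 12 / (n:ℝ) * (a + x) * (X ω + Y ω) ≤ X ω := (le_div_iff₀ hsum).mp hω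
        have h2 : 12 / (n:ℝ) * (a + x) * ((n:ℝ) / 2) ≤ 12 / (n:ℝ) * (a + x) * (X ω + Y ω) :=
          mul_le_mul_of_nonneg_left (by linarith) ht0.le
        have h3 : 12 / (n:ℝ) * (a + x) * ((n:ℝ) / 2) = 6 * (a + x) := by
          field_simp
          ring
        show 6 * (a + x) ≤ X ω
        linarith
    have hA := gamma_tail_ge ha hX (6 * (a + x))
    have hB := gamma_tail_le hnpos hY ((n:ℝ) / 2)
    have hA' : (2:ℝ) ^ a * Real.exp (-(6 * (a + x) / 2)) ≤ Real.exp (-x) := by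
      rw [Real.rpow_def_of_pos (by norm_num : (0:ℝ) < 2), ← Real.exp_add, Real.exp_le_exp]
      nlinarith [Real.log_two_lt_d9, Real.log_two_gt_d9]
    have hB' : (2:ℝ) ^ (-(n:ℝ)) * Real.exp ((n:ℝ) / 2) ≤ Real.exp (-x) := by
      rw [Real.rpow_def_of_pos (by norm_num : (0:ℝ) < 2), ← Real.exp_add, Real.exp_le_exp]
      nlinarith [Real.log_two_gt_d9]
    calc P {ω | 12 / (n:ℝ) * (a + x) ≤ X ω / (X ω + Y ω)}
        ≤ P ({ω | 6 * (a + x) ≤ X ω} ∪ {ω | Y ω ≤ (n:ℝ) / 2}) := hsub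
      _ ≤ P {ω | 6 * (a + x) ≤ X ω} + P {ω | Y ω ≤ (n:ℝ) / 2} := measure_union_le _ _
      _ ≤ ENNReal.ofReal ((2:ℝ) ^ a * Real.exp (-(6 * (a + x) / 2)))
            + ENNReal.ofReal ((2:ℝ) ^ (-(n:ℝ)) * Real.exp ((n:ℝ) / 2)) := add_le_add hA hB
      _ ≤ ENNReal.ofReal (Real.exp (-x)) + ENNReal.ofReal (Real.exp (-x)) :=
          add_le_add (ENNReal.ofReal_le_ofReal hA') (ENNReal.ofReal_le_ofReal hB')
      _ = ENNReal.ofReal (2 * Real.exp (-x)) := by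
          rw [← ENNReal.ofReal_add (Real.exp_nonneg _) (Real.exp_nonneg _)]
          · congr 1
            ring
end

section
/- Let $V_n \sim \mathrm{Beta}(a, n)$ with $a > 0$ fixed, and let $t_n \to t \in [0,1)$ be a real sequence. Then $\mathbb{E}\, e^{n t_n V_n} \to (1-t)^{-a}$ as $n \to \infty$. In particular, if $t_n \to 0$ then $\mathbb{E}\, e^{n t_n V_n} \to 1$. -/
open MeasureTheory Filter Real
open Set


lemma aux_integrable {a r : ℝ} (ha : 0 < a) (hr : 0 < r) :
    IntegrableOn (fun u : ℝ => u ^ (a - 1) * Real.exp (-(r * u))) (Set.Ioi 0) := by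
  have h : IntegrableOn (fun x : ℝ => Real.exp (-x) * x ^ (a - 1)) (Set.Ioi (r * 0)) := by
    rw [mul_zero]; exact Real.GammaIntegral_convergent ha
  have h2 : IntegrableOn (fun u : ℝ => Real.exp (-(r * u)) * (r * u) ^ (a - 1)) (Set.Ioi 0) :=
    (integrableOn_Ioi_comp_mul_left_iff
      (fun x : ℝ => Real.exp (-x) * x ^ (a - 1)) 0 hr).2 h
  have h3 : IntegrableOn
      (fun u : ℝ => (r ^ (a - 1))⁻¹ * (Real.exp (-(r * u)) * (r * u) ^ (a - 1)))
      (Set.Ioi 0) := h2.const_mul _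
  refine IntegrableOn.congr_fun h3 (fun u hu => ?_) measurableSet_Ioi
  have hu0 : (0:ℝ) < u := hu
  rw [Real.mul_rpow hr.le hu0.le]
  have : r ^ (a - 1) ≠ 0 := (Real.rpow_pos_of_pos hr _).ne'
  field_simp


lemma beta_subst (a : ℝ) (c : ℝ) {n : ℕ} (hn : 1 ≤ n) :
    (n:ℝ) ^ a * ∫ v in Set.Ioo (0:ℝ) 1,
        Real.exp (n * c * v) * v ^ (a - 1) * (1 - v) ^ ((n:ℝ) - 1)
      = ∫ u in Set.Ioo (0:ℝ) (n:ℝ),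
        Real.exp (c * u) * u ^ (a - 1) * (1 - u / n) ^ ((n:ℝ) - 1) := by
  have hn0 : (0:ℝ) < n := by exact_mod_cast hn
  set f : ℝ → ℝ := fun v => Real.exp (n * c * v) * v ^ (a - 1) * (1 - v) ^ ((n:ℝ) - 1) with hf
  have key := intervalIntegral.integral_comp_div (a := 0) (b := (n:ℝ)) (c := (n:ℝ)) f hn0.ne'
  rw [zero_div, div_self hn0.ne'] at key
  have h1 : (∫ x in (0:ℝ)..(n:ℝ), f (x / n)) = ∫ u in Set.Ioo (0:ℝ) (n:ℝ), f (u / n) := by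
    rw [intervalIntegral.integral_of_le hn0.le, integral_Ioc_eq_integral_Ioo]
  have h2 : (∫ x in (0:ℝ)..(1:ℝ), f x) = ∫ v in Set.Ioo (0:ℝ) 1, f v := by
    rw [intervalIntegral.integral_of_le zero_le_one, integral_Ioc_eq_integral_Ioo]
  have h3 : ∀ u ∈ Set.Ioo (0:ℝ) (n:ℝ),
      Real.exp (c * u) * u ^ (a - 1) * (1 - u / n) ^ ((n:ℝ) - 1)
        = (n:ℝ) ^ (a - 1) * f (u / n) := by
    intro u hu
    have hu0 : (0:ℝ) < u := hu.1
    have hna : (0:ℝ) < (n:ℝ) ^ (a - 1) := Real.rpow_pos_of_pos hn0 _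
    simp only [hf]
    rw [Real.div_rpow hu0.le hn0.le]
    have he : (n:ℝ) * c * (u / n) = c * u := by field_simp
    rw [he]
    field_simp
  symm
  calc (∫ u in Set.Ioo (0:ℝ) (n:ℝ),
        Real.exp (c * u) * u ^ (a - 1) * (1 - u / n) ^ ((n:ℝ) - 1))
      = ∫ u in Set.Ioo (0:ℝ) (n:ℝ), (n:ℝ) ^ (a - 1) * f (u / n) :=
        setIntegral_congr_fun measurableSet_Ioo h3
    _ = (n:ℝ) ^ (a - 1) * ∫ u in Set.Ioo (0:ℝ) (n:ℝ), f (u / n) := by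
        rw [integral_const_mul]
    _ = (n:ℝ) ^ (a - 1) * ((n:ℝ) • ∫ v in Set.Ioo (0:ℝ) 1, f v) := by
        rw [← h1, key, h2]
    _ = (n:ℝ) ^ a * ∫ v in Set.Ioo (0:ℝ) 1, f v := by
        rw [smul_eq_mul, ← mul_assoc]
        congr 1
        rw [← Real.rpow_add_one hn0.ne' (a - 1)]
        norm_num


lemma beta_key (a : ℝ) (ha : 0 < a) (t : ℝ) (ht1 : t < 1) (ts : ℕ → ℝ)
    (hts : Filter.Tendsto ts atTop (nhds t)) :
    Filter.Tendsto (fun n : ℕ => ∫ u in Set.Ioo (0:ℝ) (n:ℝ),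
        Real.exp (ts n * u) * u ^ (a - 1) * (1 - u / n) ^ ((n:ℝ) - 1))
      atTop (nhds ((1 / (1 - t)) ^ a * Real.Gamma a)) := by
  set t' : ℝ := (1 + t) / 2 with ht'
  have htt' : t < t' := by rw [ht']; linarith
  have ht'1 : t' < 1 := by rw [ht']; linarith
  set G : ℕ → ℝ → ℝ := fun n u =>
    Real.exp (ts n * u) * u ^ (a - 1) * (1 - u / n) ^ ((n:ℝ) - 1) with hG
  have hrw : ∀ n : ℕ, (∫ u in Set.Ioo (0:ℝ) (n:ℝ), G n u)
      = ∫ u in Set.Ioi (0:ℝ), (Set.Ioo (0:ℝ) (n:ℝ)).indicator (G n) u := by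
    intro n
    rw [setIntegral_indicator measurableSet_Ioo,
      Set.inter_eq_self_of_subset_right Set.Ioo_subset_Ioi_self]
  refine (tendsto_congr hrw).mpr ?_
  have hlimval : (∫ u in Set.Ioi (0:ℝ), Real.exp (t * u) * u ^ (a - 1) * Real.exp (-u))
      = (1 / (1 - t)) ^ a * Real.Gamma a := by
    rw [← Real.integral_rpow_mul_exp_neg_mul_Ioi ha (by linarith : (0:ℝ) < 1 - t)]
    refine setIntegral_congr_fun measurableSet_Ioi (fun u hu => ?_)
    rw [mul_comm (Real.exp (t * u)), mul_assoc, ← Real.exp_add]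
    ring_nf
  rw [← hlimval]
  refine tendsto_integral_filter_of_dominated_convergence
    (fun u => Real.exp 1 * (u ^ (a - 1) * Real.exp (-((1 - t') * u)))) ?_ ?_ ?_ ?_
  · -- measurability
    filter_upwards with n
    refine (Measurable.indicator ?_ measurableSet_Ioo).aestronglyMeasurable
    fun_prop
  · -- bound
    filter_upwards [hts.eventually (eventually_le_nhds htt'), eventually_ge_atTop 1]
      with n hn hn1
    filter_upwards [ae_restrict_mem measurableSet_Ioi] with u hu
    have hn0 : (0:ℝ) < n := by exact_mod_cast hn1
    by_cases hmem : u ∈ Set.Ioo (0:ℝ) (n:ℝ)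
    · rw [Set.indicator_of_mem hmem]
      have hu0 : (0:ℝ) < u := hmem.1
      have hun : u / (n:ℝ) ≤ 1 := by
        rw [div_le_one hn0]; exact hmem.2.le
      have hbase : (0:ℝ) ≤ 1 - u / n := by linarith
      have hexp : (0:ℝ) ≤ (n:ℝ) - 1 := by
        have : (1:ℝ) ≤ n := by exact_mod_cast hn1
        linarith
      have h2 : (1 - u / n) ^ ((n:ℝ) - 1) ≤ Real.exp (-(u / n)) ^ ((n:ℝ) - 1) := by
        apply Real.rpow_le_rpow hbase _ hexp
        have := Real.add_one_le_exp (-(u / n))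
        linarith
      have h2' : Real.exp (-(u / n)) ^ ((n:ℝ) - 1) = Real.exp (-(u / n) * ((n:ℝ) - 1)) :=
        (Real.exp_mul _ _).symm
      have h2'' : -(u / n) * ((n:ℝ) - 1) = -u + u / n := by
        field_simp; ring
      have h2''' : (1 - u / n) ^ ((n:ℝ) - 1) ≤ Real.exp (-u + 1) := by
        rw [h2', h2''] at h2
        exact h2.trans (Real.exp_le_exp.2 (by linarith))
      have h1 : Real.exp (ts n * u) ≤ Real.exp (t' * u) :=
        Real.exp_le_exp.2 (mul_le_mul_of_nonneg_right hn hu0.le)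
      have hnorm : ‖G n u‖ = G n u := by
        rw [Real.norm_eq_abs, abs_of_nonneg]
        exact mul_nonneg (mul_nonneg (Real.exp_pos _).le (Real.rpow_nonneg hu0.le _))
          (Real.rpow_nonneg hbase _)
      rw [hnorm]
      have hub : u ^ (a - 1) ≥ 0 := Real.rpow_nonneg hu0.le _
      calc G n u ≤ Real.exp (t' * u) * u ^ (a - 1) * Real.exp (-u + 1) := by
            refine mul_le_mul (mul_le_mul h1 le_rfl hub (Real.exp_pos _).le) h2'''
              (Real.rpow_nonneg hbase _) (mul_nonneg (Real.exp_pos _).le hub)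
        _ = Real.exp 1 * (u ^ (a - 1) * Real.exp (-((1 - t') * u))) := by
            rw [mul_comm (Real.exp (t' * u)), mul_assoc, ← Real.exp_add]
            rw [mul_comm (Real.exp 1), mul_assoc, ← Real.exp_add]
            ring_nf
    · rw [Set.indicator_of_notMem hmem, norm_zero]
      have hu0 : (0:ℝ) < u := hu
      exact mul_nonneg (Real.exp_pos _).le
        (mul_nonneg (Real.rpow_nonneg hu0.le _) (Real.exp_pos _).le)
  · -- bound integrable
    exact (aux_integrable ha (by linarith : (0:ℝ) < 1 - t')).const_mul _
  · -- pointwise limit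
    filter_upwards [ae_restrict_mem measurableSet_Ioi] with u hu
    have hu0 : (0:ℝ) < u := hu
    have hev : ∀ᶠ n : ℕ in atTop, u < (n:ℝ) :=
      tendsto_natCast_atTop_atTop.eventually_gt_atTop u
    have hA : Filter.Tendsto (fun n => Real.exp (ts n * u)) atTop (nhds (Real.exp (t * u))) :=
      (Real.continuous_exp.tendsto _).comp (hts.mul_const u)
    have hB : Filter.Tendsto (fun n : ℕ => (1 - u / n) ^ ((n:ℝ) - 1)) atTop
        (nhds (Real.exp (-u))) := by
      have hb : Filter.Tendsto (fun n : ℕ => (1 + (-u) / n) ^ n) atTop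
          (nhds (Real.exp (-u))) := Real.tendsto_one_add_div_pow_exp (-u)
      have hc0 : Filter.Tendsto (fun n : ℕ => 1 - u / (n:ℝ)) atTop (nhds 1) := by
        have := tendsto_const_div_atTop_nhds_zero_nat u
        simpa using tendsto_const_nhds.sub this
      have hc : Filter.Tendsto (fun n : ℕ => (1 - u / (n:ℝ))⁻¹) atTop (nhds 1) := by
        simpa using hc0.inv₀ one_ne_zero
      have := hb.mul hc
      rw [mul_one] at this
      refine this.congr' ?_
      filter_upwards [hev] with n hn
      have hx : (0:ℝ) < 1 - u / n := by
        rw [sub_pos, div_lt_one (lt_trans hu0 hn)]; exact hn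
      rw [show (1:ℝ) + (-u) / n = 1 - u / n by ring]
      rw [show ((n:ℝ) - 1) = (n:ℝ) - (1:ℝ) from rfl, Real.rpow_sub hx,
        Real.rpow_natCast, Real.rpow_one]
      ring
    have hfull : Filter.Tendsto (fun n => G n u) atTop
        (nhds (Real.exp (t * u) * u ^ (a - 1) * Real.exp (-u))) :=
      (hA.mul_const _).mul hB
    refine hfull.congr' ?_
    filter_upwards [hev] with n hn
    exact (Set.indicator_of_mem (Set.mem_Ioo.mpr ⟨hu0, hn⟩) (G n)).symm


/-- If `Vₙ ~ Beta(a,n)` with `a > 0` and `tₙ → t ∈ [0,1)`, then `E e^{n tₙ Vₙ} → (1-t)^{-a}`,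
where `E e^{n tₙ Vₙ}` is the ratio of the integrals `∫₀¹ e^{n tₙ v} v^{a-1}(1-v)^{n-1} dv`
and `∫₀¹ v^{a-1}(1-v)^{n-1} dv`. -/
theorem beta_mgf_limit (a : ℝ) (ha : 0 < a) (t : ℝ) (ht : t ∈ Set.Ico (0 : ℝ) 1)
    (ts : ℕ → ℝ) (hts : Tendsto ts atTop (nhds t)) :
    Tendsto (fun n : ℕ =>
        (∫ v in Set.Ioo (0:ℝ) 1, Real.exp (n * ts n * v) * v ^ (a - 1) * (1 - v) ^ ((n:ℝ) - 1))
          / (∫ v in Set.Ioo (0:ℝ) 1, v ^ (a - 1) * (1 - v) ^ ((n:ℝ) - 1)))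
      atTop (nhds ((1 - t) ^ (-a))) := by
  obtain ⟨ht0, ht1⟩ := ht
  have hnum := beta_key a ha t ht1 ts hts
  have hden := beta_key a ha 0 one_pos (fun _ => (0:ℝ)) tendsto_const_nhds
  have hΓ : Real.Gamma a ≠ 0 := (Real.Gamma_pos_of_pos ha).ne'
  have hden_ne : ((1 / (1 - (0:ℝ))) ^ a * Real.Gamma a) ≠ 0 := by
    simp [hΓ]
  have hdiv := hnum.div hden hden_ne
  have hlim : ((1 / (1 - t)) ^ a * Real.Gamma a) / ((1 / (1 - (0:ℝ))) ^ a * Real.Gamma a)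
      = (1 - t) ^ (-a) := by
    rw [sub_zero, div_one, Real.one_rpow, one_mul, mul_div_assoc, div_self hΓ, mul_one,
      one_div, ← Real.rpow_neg_one (1 - t),
      ← Real.rpow_mul (by linarith : (0:ℝ) ≤ 1 - t), neg_one_mul]
  rw [hlim] at hdiv
  refine hdiv.congr' ?_
  filter_upwards [eventually_ge_atTop 1] with n hn
  have hnn : (0:ℝ) < (n:ℝ) := by exact_mod_cast hn
  have hn0 : ((n:ℝ) ^ a) ≠ 0 := (Real.rpow_pos_of_pos hnn a).ne'
  simp only [Pi.div_apply]
  rw [← beta_subst a (ts n) hn, ← beta_subst a 0 hn]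
  have : (∫ v in Set.Ioo (0:ℝ) 1, Real.exp ((n:ℝ) * 0 * v) * v ^ (a - 1) * (1 - v) ^ ((n:ℝ) - 1))
      = ∫ v in Set.Ioo (0:ℝ) 1, v ^ (a - 1) * (1 - v) ^ ((n:ℝ) - 1) := by
    refine setIntegral_congr_fun measurableSet_Ioo (fun v hv => ?_)
    simp
  rw [this, mul_div_mul_left _ _ hn0]
end

section
/- For any $t < 1$ and $a > 0$, as $n \to \infty$, $n^{a}\int_0^1 e^{ntv} v^{a-1}(1-v)^{n-1}\,dv \to (1-t)^{-a}\Gamma(a)$. -/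
open MeasureTheory Filter Real

/-- For any `t < 1` and `a > 0`, `n^a ∫₀¹ e^{ntv} v^{a-1}(1-v)^{n-1} dv → (1-t)^{-a} Γ(a)`. -/
theorem gamma_integral_limit (a t : ℝ) (ha : 0 < a) (ht : t < 1) :
    Tendsto (fun n : ℕ =>
        (n : ℝ) ^ a *
          ∫ v in Set.Ioo (0:ℝ) 1, Real.exp (n * t * v) * v ^ (a - 1) * (1 - v) ^ ((n:ℝ) - 1))
      atTop (nhds ((1 - t) ^ (-a) * Real.Gamma a)) := by
  have ht' : 0 < 1 - t := by linarith
  -- the limit function and the sequence of truncated functions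
  set g : ℝ → ℝ := fun u => u ^ (a - 1) * Real.exp (-((1 - t) * u)) with hg
  set f : ℕ → ℝ → ℝ := fun n => Set.indicator (Set.Ioo 0 (n : ℝ))
    (fun u => Real.exp (t * u) * u ^ (a - 1) * (1 - u / n) ^ ((n : ℝ) - 1)) with hf
  -- the dominating function is integrable
  have hbound_int : IntegrableOn
      (fun u : ℝ => Real.exp 1 * (u ^ (a - 1) * Real.exp (-((1 - t) * u))))
      (Set.Ioi 0) := by
    apply Integrable.const_mul
    have h := integrableOn_rpow_mul_exp_neg_mul_rpow (p := 1) (s := a - 1) (b := 1 - t)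
      (by linarith) zero_lt_one ht'
    refine h.congr_fun (fun x hx => ?_) measurableSet_Ioi
    beta_reduce
    rw [Real.rpow_one, neg_mul]
  -- measurability
  have hmeas : ∀ n : ℕ, AEStronglyMeasurable (f n) (volume.restrict (Set.Ioi 0)) := by
    intro n
    refine Measurable.aestronglyMeasurable ?_
    refine Measurable.indicator ?_ measurableSet_Ioo
    fun_prop
  -- uniform bound
  have h_bound : ∀ n : ℕ, ∀ᵐ u ∂(volume.restrict (Set.Ioi (0:ℝ))),
      ‖f n u‖ ≤ Real.exp 1 * (u ^ (a - 1) * Real.exp (-((1 - t) * u))) := by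
    intro n
    filter_upwards [ae_restrict_mem measurableSet_Ioi] with u hu
    have hu0 : (0:ℝ) < u := hu
    by_cases hmem : u ∈ Set.Ioo (0:ℝ) (n:ℝ)
    · have hun : u < (n:ℝ) := hmem.2
      have hn0 : (0:ℝ) < (n:ℝ) := lt_trans hu0 hun
      have hn1 : (1:ℝ) ≤ (n:ℝ) := by
        have : 0 < n := by exact_mod_cast hn0
        exact_mod_cast this
      have hb0 : 0 < 1 - u / n := by
        rw [sub_pos]
        exact (div_lt_one hn0).mpr hun
      have key : (1 - u / n) ^ ((n:ℝ) - 1) ≤ Real.exp 1 * Real.exp (-u) := by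
        have step1 : 1 - u / n ≤ Real.exp (-(u / n)) := by
          have := Real.add_one_le_exp (-(u / n))
          linarith
        have step2 : (1 - u / n) ^ ((n:ℝ) - 1) ≤ (Real.exp (-(u / n))) ^ ((n:ℝ) - 1) :=
          Real.rpow_le_rpow hb0.le step1 (by linarith)
        have step3 : (Real.exp (-(u / n))) ^ ((n:ℝ) - 1) = Real.exp (-(u / n) * ((n:ℝ) - 1)) :=
          (Real.exp_mul _ _).symm
        have step4 : -(u / n) * ((n:ℝ) - 1) = -u + u / n := by
          field_simp
          ring
        have step5 : u / n ≤ 1 := (div_le_one hn0).mpr hun.le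
        calc (1 - u / n) ^ ((n:ℝ) - 1) ≤ Real.exp (-(u / n) * ((n:ℝ) - 1)) := by
              rw [← step3]; exact step2
          _ ≤ Real.exp (1 + -u) := by
              apply Real.exp_le_exp.mpr
              rw [step4]; linarith
          _ = Real.exp 1 * Real.exp (-u) := Real.exp_add _ _
      have hnn : 0 ≤ Real.exp (t * u) * u ^ (a - 1) * (1 - u / n) ^ ((n:ℝ) - 1) := by
        have h1 := Real.exp_pos (t * u)
        have h2 := Real.rpow_nonneg hu0.le (a - 1)
        have h3 := Real.rpow_nonneg hb0.le ((n:ℝ) - 1)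
        positivity
      rw [hf]
      simp only [Set.indicator_of_mem hmem]
      rw [Real.norm_eq_abs, abs_of_nonneg hnn]
      calc Real.exp (t * u) * u ^ (a - 1) * (1 - u / n) ^ ((n:ℝ) - 1)
          ≤ Real.exp (t * u) * u ^ (a - 1) * (Real.exp 1 * Real.exp (-u)) := by
            apply mul_le_mul_of_nonneg_left key
            positivity
        _ = Real.exp 1 * (u ^ (a - 1) * Real.exp (-((1 - t) * u))) := by
            rw [show -((1 - t) * u) = t * u + -u by ring, Real.exp_add]
            ring
    · rw [hf]
      simp only [Set.indicator_of_notMem hmem, norm_zero]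
      have h2 := Real.rpow_nonneg hu0.le (a - 1)
      positivity
  -- pointwise convergence
  have h_lim : ∀ᵐ u ∂(volume.restrict (Set.Ioi (0:ℝ))),
      Tendsto (fun n : ℕ => f n u) atTop (nhds (g u)) := by
    filter_upwards [ae_restrict_mem measurableSet_Ioi] with u hu
    have hu0 : (0:ℝ) < u := hu
    have hlim1 : Tendsto (fun n : ℕ => (1 + (-u) / (n:ℝ))) atTop (nhds 1) := by
      have h0 : Tendsto (fun n : ℕ => (-u) / (n:ℝ)) atTop (nhds 0) :=
        tendsto_const_div_atTop_nhds_zero_nat (-u)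
      simpa using tendsto_const_nhds.add h0
    have hmain : Tendsto
        (fun n : ℕ => Real.exp (t * u) * u ^ (a - 1) *
          ((1 + (-u) / (n:ℝ)) ^ n / (1 + (-u) / (n:ℝ)))) atTop
        (nhds (Real.exp (t * u) * u ^ (a - 1) * (Real.exp (-u) / 1))) :=
      (((Real.tendsto_one_add_div_pow_exp (-u)).div hlim1 one_ne_zero)).const_mul _
    rw [div_one] at hmain
    have hptval : Real.exp (t * u) * u ^ (a - 1) * Real.exp (-u) = g u := by
      rw [hg]
      simp only
      rw [show -((1 - t) * u) = t * u + -u by ring, Real.exp_add]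
      ring
    rw [hptval] at hmain
    refine hmain.congr' ?_
    filter_upwards [eventually_gt_atTop ⌈u⌉₊] with n hn
    have hun : u < (n:ℝ) := lt_of_le_of_lt (Nat.le_ceil u) (by exact_mod_cast hn)
    have hb0 : 0 < 1 - u / n := by
      rw [sub_pos]
      exact (div_lt_one (lt_trans hu0 hun)).mpr hun
    rw [hf]
    simp only [Set.indicator_of_mem (Set.mem_Ioo.mpr ⟨hu0, hun⟩)]
    congr 1
    rw [show (1:ℝ) + (-u) / (n:ℝ) = 1 - u / n by ring]
    rw [Real.rpow_sub hb0, Real.rpow_one, Real.rpow_natCast]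
  -- dominated convergence
  have hDCT : Tendsto (fun n : ℕ => ∫ u in Set.Ioi (0:ℝ), f n u) atTop
      (nhds (∫ u in Set.Ioi (0:ℝ), g u)) :=
    tendsto_integral_of_dominated_convergence _ hmeas hbound_int h_bound h_lim
  -- identify the limit value
  have hval : ∫ u in Set.Ioi (0:ℝ), g u = (1 - t) ^ (-a) * Real.Gamma a := by
    rw [hg]
    simp only
    rw [Real.integral_rpow_mul_exp_neg_mul_Ioi ha ht', one_div, Real.inv_rpow ht'.le,
      ← Real.rpow_neg ht'.le]
  rw [hval] at hDCT
  refine hDCT.congr' ?_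
  -- change of variables: for n ≥ 1 the two integrals agree
  filter_upwards [eventually_ge_atTop 1] with n hn
  have hn0 : (0:ℝ) < (n:ℝ) := by exact_mod_cast hn
  have hne : (n:ℝ) ≠ 0 := hn0.ne'
  have e1 : ∫ u in Set.Ioi (0:ℝ), f n u
      = ∫ u in Set.Ioo (0:ℝ) (n:ℝ),
          Real.exp (t * u) * u ^ (a - 1) * (1 - u / n) ^ ((n:ℝ) - 1) := by
    rw [hf]
    rw [MeasureTheory.integral_indicator measurableSet_Ioo,
      Measure.restrict_restrict_of_subset Set.Ioo_subset_Ioi_self]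
  have e2 : ∫ v in Set.Ioo (0:ℝ) 1,
        Real.exp ((n:ℝ) * t * v) * v ^ (a - 1) * (1 - v) ^ ((n:ℝ) - 1)
      = (n:ℝ)⁻¹ * ∫ u in Set.Ioo (0:ℝ) (n:ℝ),
          Real.exp (t * u) * (u / n) ^ (a - 1) * (1 - u / n) ^ ((n:ℝ) - 1) := by
    have hsub := intervalIntegral.integral_comp_div (a := 0) (b := (n:ℝ)) (c := (n:ℝ))
      (f := fun v => Real.exp ((n:ℝ) * t * v) * v ^ (a - 1) * (1 - v) ^ ((n:ℝ) - 1)) hne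
    rw [zero_div, div_self hne] at hsub
    have harg : ∀ x : ℝ, (n:ℝ) * t * (x / n) = t * x := by
      intro x; field_simp
    rw [← MeasureTheory.integral_Ioc_eq_integral_Ioo,
      ← intervalIntegral.integral_of_le zero_le_one,
      ← MeasureTheory.integral_Ioc_eq_integral_Ioo,
      ← intervalIntegral.integral_of_le hn0.le]
    simp only [harg] at hsub
    rw [hsub, smul_eq_mul, inv_mul_cancel_left₀ hne]
  have e3 : ∫ u in Set.Ioo (0:ℝ) (n:ℝ),
        Real.exp (t * u) * (u / n) ^ (a - 1) * (1 - u / n) ^ ((n:ℝ) - 1)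
      = ((n:ℝ) ^ (a - 1))⁻¹ * ∫ u in Set.Ioo (0:ℝ) (n:ℝ),
          Real.exp (t * u) * u ^ (a - 1) * (1 - u / n) ^ ((n:ℝ) - 1) := by
    rw [← MeasureTheory.integral_const_mul]
    refine setIntegral_congr_fun measurableSet_Ioo fun u hu => ?_
    rw [Real.div_rpow hu.1.le hn0.le]
    field_simp
  rw [e1, e2, e3]
  have hpow : ((n:ℝ) ^ (a - 1))⁻¹ = (n:ℝ) * ((n:ℝ) ^ a)⁻¹ := by
    rw [Real.rpow_sub hn0, Real.rpow_one]
    field_simp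
  rw [hpow]
  have hapos : (0:ℝ) < (n:ℝ) ^ a := Real.rpow_pos_of_pos hn0 a
  field_simp
end

section
/- For any $\sigma, \tau > 0$, the bounded Lipschitz distance between the normal laws $N(0,\sigma^2)$ and $N(0,\tau^2)$ satisfies $d_{BL}(N(0,\sigma^2), N(0,\tau^2)) \le \sqrt{|\sigma^2 - \tau^2|}$. -/
open MeasureTheory ProbabilityTheory Real

open Set Filter

open scoped ENNReal NNReal

lemma gi_Ioi : ∫ x in Set.Ioi (0:ℝ), x * rexp (-x ^ 2 / 2) = 1 := by
  have hderiv : ∀ x ∈ Set.Ici (0:ℝ), HasDerivAt (fun y : ℝ => -rexp (-y ^ 2 / 2))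
      (x * rexp (-x ^ 2 / 2)) x := by
    intro x _
    have h1 : HasDerivAt (fun y : ℝ => -y ^ 2 / 2) (-x) x := by
      have := ((hasDerivAt_pow 2 x).neg).div_const 2
      refine this.congr_deriv ?_
      simp
      ring
    have h2 := (h1.exp).neg
    refine h2.congr_deriv ?_
    ring
  have hint : IntegrableOn (fun x : ℝ => x * rexp (-x ^ 2 / 2)) (Set.Ioi 0) := by
    have h2 : (fun x : ℝ => x * rexp (-x ^ 2 / 2))
        = fun x => x * rexp (-(2⁻¹:ℝ) * x ^ 2) := by
      ext x; ring_nf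
    rw [h2]
    exact (integrable_mul_exp_neg_mul_sq (by norm_num)).integrableOn
  have htend : Tendsto (fun y : ℝ => -rexp (-y ^ 2 / 2)) atTop (nhds 0) := by
    rw [← neg_zero]
    apply Tendsto.neg
    apply Real.tendsto_exp_atBot.comp
    apply Tendsto.atBot_div_const (by norm_num : (0:ℝ) < 2)
    exact tendsto_neg_atTop_atBot.comp (tendsto_pow_atTop two_ne_zero)
  have := integral_Ioi_of_hasDerivAt_of_tendsto' hderiv hint htend
  simp at this
  linarith

lemma gi_abs_int : Integrable (fun x : ℝ => |x| * rexp (-x ^ 2 / 2)) := by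
  have h := (integrable_mul_exp_neg_mul_sq (b := 2⁻¹) (by norm_num)).abs
  have h2 : (fun x : ℝ => |x * rexp (-2⁻¹ * x ^ 2)|)
      = fun x : ℝ => |x| * rexp (-x ^ 2 / 2) := by
    ext x
    rw [abs_mul, abs_of_pos (exp_pos _)]
    ring_nf
  rwa [h2] at h

lemma gi_abs : ∫ x : ℝ, |x| * rexp (-x ^ 2 / 2) = 2 := by
  have hsplit := intervalIntegral.integral_Iic_add_Ioi (b := (0:ℝ))
    gi_abs_int.integrableOn gi_abs_int.integrableOn
  have h1 : ∫ x in Set.Iic (0:ℝ), |x| * rexp (-x ^ 2 / 2) = 1 := by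
    have heq := integral_comp_neg_Ioi (0:ℝ) (fun x => |x| * rexp (-x ^ 2 / 2))
    rw [neg_zero] at heq
    rw [← heq, ← gi_Ioi]
    apply setIntegral_congr_fun measurableSet_Ioi
    intro x hx
    simp only [Set.mem_Ioi] at hx
    dsimp only
    rw [abs_neg, abs_of_pos hx, neg_sq]
  have h2 : ∫ x in Set.Ioi (0:ℝ), |x| * rexp (-x ^ 2 / 2) = 1 := by
    rw [← gi_Ioi]
    apply setIntegral_congr_fun measurableSet_Ioi
    intro x hx
    simp only [Set.mem_Ioi] at hx
    dsimp only
    rw [abs_of_pos hx]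
  rw [h1, h2] at hsplit
  linarith

lemma g_density : gaussianReal 0 1
    = (volume : Measure ℝ).withDensity fun x => ((gaussianPDFReal 0 1 x).toNNReal : ℝ≥0∞) := by
  rw [gaussianReal_of_var_ne_zero 0 one_ne_zero]; rfl

lemma g_meas : Measurable fun x : ℝ => (gaussianPDFReal 0 1 x).toNNReal :=
  (measurable_gaussianPDFReal 0 1).real_toNNReal

lemma g_fun_eq : (fun x : ℝ => ((gaussianPDFReal 0 1 x).toNNReal : ℝ≥0) • |x|)
    = fun x => (Real.sqrt (2*π))⁻¹ * (|x| * rexp (-x ^ 2 / 2)) := by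
  ext x
  rw [NNReal.smul_def, Real.coe_toNNReal _ (gaussianPDFReal_nonneg _ _ _)]
  simp only [gaussianPDFReal, NNReal.coe_one, mul_one, sub_zero, smul_eq_mul]
  ring

lemma g_abs_integrable : Integrable (fun x : ℝ => |x|) (gaussianReal 0 1) := by
  rw [g_density, integrable_withDensity_iff_integrable_smul g_meas]
  rw [show (fun x : ℝ => ((gaussianPDFReal 0 1 x).toNNReal : ℝ≥0) • |x|) = _ from g_fun_eq]
  exact gi_abs_int.const_mul _

lemma g_abs_le_one : ∫ x, |x| ∂(gaussianReal 0 1) ≤ 1 := by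
  rw [g_density, integral_withDensity_eq_integral_smul g_meas]
  rw [show (fun x : ℝ => ((gaussianPDFReal 0 1 x).toNNReal : ℝ≥0) • |x|) = _ from g_fun_eq]
  rw [integral_const_mul, gi_abs]
  have h2pi : (2:ℝ) ≤ Real.sqrt (2*π) := by
    have h4 : (2:ℝ) = Real.sqrt 4 := by
      rw [show (4:ℝ) = 2^2 by norm_num, Real.sqrt_sq (by norm_num : (0:ℝ) ≤ 2)]
    rw [h4]
    apply Real.sqrt_le_sqrt
    nlinarith [Real.pi_gt_three]
  rw [inv_mul_le_iff₀ (by positivity), mul_one]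
  exact h2pi

/-- The bounded Lipschitz distance between `N(0,σ²)` and `N(0,τ²)` is at most `√|σ² - τ²|`:
for every `f` bounded by `1` and `1`-Lipschitz,
`|∫ f dN(0,σ²) - ∫ f dN(0,τ²)| ≤ √|σ² - τ²|`. -/
theorem boundedLipschitz_dist_gaussians (σ τ : ℝ) (hσ : 0 < σ) (hτ : 0 < τ) :
    ∀ f : ℝ → ℝ, (∀ x, |f x| ≤ 1) → LipschitzWith 1 f →
      |(∫ x, f x ∂(gaussianReal 0 (Real.toNNReal (σ ^ 2))))
          - ∫ x, f x ∂(gaussianReal 0 (Real.toNNReal (τ ^ 2)))|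
        ≤ Real.sqrt |σ ^ 2 - τ ^ 2| := by
  intro f hb hf
  have hcont : Continuous f := hf.continuous
  have hmap : ∀ s : ℝ, gaussianReal 0 (Real.toNNReal (s ^ 2))
      = (gaussianReal 0 1).map (s * ·) := by
    intro s
    rw [gaussianReal_map_const_mul]
    congr 1
    · ring
    · ext
      simp [Real.coe_toNNReal _ (sq_nonneg s)]
  have hint : ∀ s : ℝ, Integrable (fun x => f (s * x)) (gaussianReal 0 1) := by
    intro s
    refine Integrable.mono' (integrable_const 1)
      ((hcont.comp (continuous_const.mul continuous_id)).aestronglyMeasurable)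
      (ae_of_all _ fun x => ?_)
    simpa [Real.norm_eq_abs] using hb (s * x)
  have hI : ∀ s : ℝ, ∫ x, f x ∂(gaussianReal 0 (Real.toNNReal (s ^ 2)))
      = ∫ x, f (s * x) ∂(gaussianReal 0 1) := by
    intro s
    rw [hmap s, integral_map (measurable_const_mul s).aemeasurable hcont.aestronglyMeasurable]
  rw [hI σ, hI τ, ← integral_sub (hint σ) (hint τ)]
  have hintabs : Integrable (fun x : ℝ => |σ - τ| * |x|) (gaussianReal 0 1) :=
    g_abs_integrable.const_mul _
  have step1 : |∫ x, (f (σ * x) - f (τ * x)) ∂(gaussianReal 0 1)|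
      ≤ ∫ x, |σ - τ| * |x| ∂(gaussianReal 0 1) := by
    have hn := norm_integral_le_integral_norm (μ := gaussianReal 0 1)
      (fun x => f (σ * x) - f (τ * x))
    rw [Real.norm_eq_abs] at hn
    refine hn.trans ?_
    refine integral_mono ((hint σ).sub (hint τ)).norm hintabs fun x => ?_
    have hd := hf.dist_le_mul (σ * x) (τ * x)
    simp only [Real.dist_eq, NNReal.coe_one, one_mul] at hd
    calc ‖f (σ * x) - f (τ * x)‖ = |f (σ * x) - f (τ * x)| := by rw [Real.norm_eq_abs]
      _ ≤ |σ * x - τ * x| := hd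
      _ = |σ - τ| * |x| := by rw [← sub_mul, abs_mul]
  have step2 : ∫ x, |σ - τ| * |x| ∂(gaussianReal 0 1) ≤ |σ - τ| := by
    rw [integral_const_mul]
    calc |σ - τ| * ∫ x, |x| ∂(gaussianReal 0 1) ≤ |σ - τ| * 1 :=
          mul_le_mul_of_nonneg_left g_abs_le_one (abs_nonneg _)
      _ = |σ - τ| := mul_one _
  have step3 : |σ - τ| ≤ Real.sqrt |σ ^ 2 - τ ^ 2| := by
    rw [← Real.sqrt_sq_eq_abs]
    apply Real.sqrt_le_sqrt
    rcases abs_cases (σ ^ 2 - τ ^ 2) with ⟨h, h'⟩ | ⟨h, h'⟩ <;>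
      nlinarith [mul_pos hσ hτ, sq_nonneg (σ - τ), sq_nonneg (σ + τ)]
  calc |∫ x, (f (σ * x) - f (τ * x)) ∂(gaussianReal 0 1)|
      ≤ ∫ x, |σ - τ| * |x| ∂(gaussianReal 0 1) := step1
    _ ≤ |σ - τ| := step2
    _ ≤ Real.sqrt |σ ^ 2 - τ ^ 2| := step3
end

section
/- Let $Q \sim \mathrm{DP}(\nu)$ be a Dirichlet process with finite base measure $\nu \ne 0$ on a measurable space, and let $G \ge 0$ be measurable with $\int e^{tG}\,d\nu < \infty$. Then $\mathbb{E}\, e^{t\, QG} \le \int e^{tG}\,d\nu / |\nu|$ for every $t \ge 0$, where $|\nu| = \nu(\mathcal{X})$ and $QG = \int G \, dQ$. -/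
open MeasureTheory Real

set_option maxHeartbeats 1000000

/-- Jensen bound for the Dirichlet process: if `Q` is a random probability measure (e.g. a
Dirichlet process `DP(ν)`) whose mean measure is `ν/|ν|`, i.e. `E[Qf] = νf/|ν|` for every
`ν`-integrable measurable `f`, and `G ≥ 0` is measurable with `∫ e^{tG} dν < ∞`, then
`E e^{t QG} ≤ (∫ e^{tG} dν)/|ν|` for every `t ≥ 0`. -/
theorem dirichlet_process_exp_moment_bound
    {Ω : Type*} [MeasurableSpace Ω] (P : Measure Ω) [IsProbabilityMeasure P]
    {X : Type*} [MeasurableSpace X] (ν : Measure X) [IsFiniteMeasure ν] (hν : ν ≠ 0)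
    (Q : Ω → Measure X) (hQprob : ∀ ω, IsProbabilityMeasure (Q ω))
    (hmean : ∀ f : X → ℝ, Measurable f → Integrable f ν →
      ∫ ω, (∫ x, f x ∂(Q ω)) ∂P = (∫ x, f x ∂ν) / (ν Set.univ).toReal)
    (G : X → ℝ) (hG : Measurable G) (hGpos : ∀ x, 0 ≤ G x)
    (t : ℝ) (ht : 0 ≤ t)
    (hInt : Integrable (fun x => Real.exp (t * G x)) ν) :
    ∫ ω, Real.exp (t * ∫ x, G x ∂(Q ω)) ∂P
      ≤ (∫ x, Real.exp (t * G x) ∂ν) / (ν Set.univ).toReal := by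
  set c : ℝ := (ν Set.univ).toReal with hc
  have hcpos : 0 < c := by
    rw [hc]
    exact ENNReal.toReal_pos (by simpa [Measure.measure_univ_ne_zero] using hν)
      (measure_ne_top ν _)
  set F : X → ℝ := fun x => Real.exp (t * G x) with hF
  set Fn : ℕ → X → ℝ := fun n x => Real.exp (t * min (G x) n) with hFn
  have hFmeas : Measurable F := (hG.const_mul t).exp
  have hFnmeas : ∀ n, Measurable (Fn n) := fun n =>
    ((hG.min measurable_const).const_mul t).exp
  have hFn_le_F : ∀ n x, Fn n x ≤ F x := fun n x =>
    Real.exp_le_exp.mpr (mul_le_mul_of_nonneg_left (min_le_left _ _) ht)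
  have hFn_one : ∀ n x, 1 ≤ Fn n x := fun n x => by
    rw [show (1 : ℝ) = Real.exp 0 by simp]
    exact Real.exp_le_exp.mpr (mul_nonneg ht (le_min (hGpos x) (Nat.cast_nonneg n)))
  have hF_one : ∀ x, 1 ≤ F x := fun x => by
    rw [show (1 : ℝ) = Real.exp 0 by simp]
    exact Real.exp_le_exp.mpr (mul_nonneg ht (hGpos x))
  have hFn_bd : ∀ n x, Fn n x ≤ Real.exp (t * n) := fun n x =>
    Real.exp_le_exp.mpr (mul_le_mul_of_nonneg_left (min_le_right _ _) ht)
  have hFn_int : ∀ (μ : Measure X) [IsFiniteMeasure μ], ∀ n : ℕ, Integrable (Fn n) μ := by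
    intro μ _ n
    refine (integrable_const (Real.exp (t * n))).mono' (hFnmeas n).aestronglyMeasurable
      (ae_of_all _ fun x => ?_)
    rw [Real.norm_eq_abs, abs_of_nonneg (le_trans zero_le_one (hFn_one n x))]
    exact hFn_bd n x
  have hRHS_nonneg : 0 ≤ (∫ x, F x ∂ν) / c :=
    div_nonneg (integral_nonneg fun x => (Real.exp_pos _).le) hcpos.le
  by_cases hLint : Integrable (fun ω => Real.exp (t * ∫ x, G x ∂(Q ω))) P
  case neg =>
    rw [integral_undef hLint]; exact hRHS_nonneg
  -- the integrals in ℝ≥0∞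
  set L : Ω → ENNReal := fun ω => ∫⁻ x, ENNReal.ofReal (F x) ∂(Q ω) with hL
  set Ln : ℕ → Ω → ENNReal := fun n ω => ∫⁻ x, ENNReal.ofReal (Fn n x) ∂(Q ω) with hLn
  -- pointwise Jensen bound
  have hpt : ∀ ω, ENNReal.ofReal (Real.exp (t * ∫ x, G x ∂(Q ω))) ≤ L ω := by
    intro ω
    haveI := hQprob ω
    show ENNReal.ofReal (Real.exp (t * ∫ x, G x ∂(Q ω)))
      ≤ ∫⁻ x, ENNReal.ofReal (F x) ∂(Q ω)
    by_cases hFi : Integrable F (Q ω)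
    · rw [← ofReal_integral_eq_lintegral_ofReal hFi
        (ae_of_all _ fun x => (Real.exp_pos _).le)]
      refine ENNReal.ofReal_le_ofReal ?_
      rcases ht.eq_or_lt with h0 | htpos
      · simp only [← h0, zero_mul, Real.exp_zero]
        calc (1:ℝ) = ∫ _x, (1:ℝ) ∂(Q ω) := by simp
        _ ≤ ∫ x, F x ∂(Q ω) := integral_mono (integrable_const 1) hFi hF_one
      · have hGint : Integrable G (Q ω) := by
          refine (hFi.div_const t).mono' hG.aestronglyMeasurable (ae_of_all _ fun x => ?_)
          rw [Real.norm_eq_abs, abs_of_nonneg (hGpos x)]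
          rw [le_div_iff₀ htpos, mul_comm]
          exact (Real.add_one_le_exp (t * G x)).trans' (by linarith)
        have := convexOn_exp.map_integral_le (μ := Q ω) (f := fun x => t * G x)
          continuous_exp.continuousOn isClosed_univ
          (ae_of_all _ fun x => Set.mem_univ _) (hGint.const_mul t)
          (by exact hFi)
        simpa [integral_const_mul, hF] using this
    · have : (∫⁻ x, ENNReal.ofReal (F x) ∂(Q ω)) = ⊤ := by
        by_contra h
        apply hFi
        refine ⟨hFmeas.aestronglyMeasurable, ?_⟩
        rw [hasFiniteIntegral_iff_ofReal (ae_of_all _ fun x => (Real.exp_pos _).le)]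
        exact lt_top_iff_ne_top.mpr h
      rw [this]; exact le_top
  -- facts about Ln
  have hLn_eq : ∀ n ω, Ln n ω = ENNReal.ofReal (∫ x, Fn n x ∂(Q ω)) := by
    intro n ω
    haveI := hQprob ω
    show (∫⁻ x, ENNReal.ofReal (Fn n x) ∂(Q ω)) = _
    rw [← ofReal_integral_eq_lintegral_ofReal (hFn_int (Q ω) n)
      (ae_of_all _ fun x => le_trans zero_le_one (hFn_one n x))]
  have hmean_n : ∀ n, ∫ ω, (∫ x, Fn n x ∂(Q ω)) ∂P = (∫ x, Fn n x ∂ν) / c :=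
    fun n => hmean (Fn n) (hFnmeas n) (hFn_int ν n)
  have hFn_nu_pos : ∀ n, 0 < ∫ x, Fn n x ∂ν := by
    intro n
    calc (0:ℝ) < c := hcpos
    _ = ∫ _x, (1:ℝ) ∂ν := by simp [hc, Measure.real]
    _ ≤ ∫ x, Fn n x ∂ν := integral_mono (integrable_const 1) (hFn_int ν n) (hFn_one n)
  have hhn_int : ∀ n, Integrable (fun ω => ∫ x, Fn n x ∂(Q ω)) P := by
    intro n
    by_contra h
    have h0 : ∫ ω, (∫ x, Fn n x ∂(Q ω)) ∂P = 0 := integral_undef h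
    rw [hmean_n n] at h0
    exact absurd h0 (ne_of_gt (div_pos (hFn_nu_pos n) hcpos))
  have hLn_aemeas : ∀ n, AEMeasurable (Ln n) P := by
    intro n
    have : Ln n = fun ω => ENNReal.ofReal (∫ x, Fn n x ∂(Q ω)) := funext (hLn_eq n)
    rw [this]
    exact ENNReal.measurable_ofReal.comp_aemeasurable (hhn_int n).aemeasurable
  have hLn_mono : ∀ ω, Monotone fun n => Ln n ω := by
    intro ω m n hmn
    refine lintegral_mono fun x => ENNReal.ofReal_le_ofReal ?_
    exact Real.exp_le_exp.mpr (mul_le_mul_of_nonneg_left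
      (min_le_min le_rfl (Nat.cast_le.mpr hmn)) ht)
  have hsupFn : ∀ x, (⨆ n, ENNReal.ofReal (Fn n x)) = ENNReal.ofReal (F x) := by
    intro x
    refine le_antisymm (iSup_le fun n => ENNReal.ofReal_le_ofReal (hFn_le_F n x)) ?_
    have h : Fn ⌈G x⌉₊ x = F x := by
      show Real.exp (t * min (G x) ((⌈G x⌉₊ : ℕ) : ℝ)) = Real.exp (t * G x)
      rw [min_eq_left (Nat.le_ceil (G x))]
    calc ENNReal.ofReal (F x) = ENNReal.ofReal (Fn ⌈G x⌉₊ x) := by rw [h]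
    _ ≤ ⨆ n, ENNReal.ofReal (Fn n x) := le_iSup (fun n => ENNReal.ofReal (Fn n x)) ⌈G x⌉₊
  have hLn_sup : ∀ ω, (⨆ n, Ln n ω) = L ω := by
    intro ω
    show (⨆ n, ∫⁻ x, ENNReal.ofReal (Fn n x) ∂(Q ω)) = ∫⁻ x, ENNReal.ofReal (F x) ∂(Q ω)
    calc (⨆ n, ∫⁻ x, ENNReal.ofReal (Fn n x) ∂(Q ω))
        = ∫⁻ x, ⨆ n, ENNReal.ofReal (Fn n x) ∂(Q ω) :=
          (lintegral_iSup (fun n => (hFnmeas n).ennreal_ofReal)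
            (fun m n hmn x => ENNReal.ofReal_le_ofReal (Real.exp_le_exp.mpr
              (mul_le_mul_of_nonneg_left (min_le_min le_rfl (Nat.cast_le.mpr hmn)) ht)))).symm
    _ = ∫⁻ x, ENNReal.ofReal (F x) ∂(Q ω) := lintegral_congr fun x => hsupFn x
  -- key bound on ∫⁻ L
  have key : ∫⁻ ω, L ω ∂P ≤ ENNReal.ofReal ((∫ x, F x ∂ν) / c) := by
    have : ∫⁻ ω, L ω ∂P = ⨆ n, ∫⁻ ω, Ln n ω ∂P := by
      rw [← lintegral_iSup' hLn_aemeas (ae_of_all _ hLn_mono)]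
      exact lintegral_congr fun ω => (hLn_sup ω).symm
    rw [this]
    refine iSup_le fun n => ?_
    have h1 : ∫⁻ ω, Ln n ω ∂P = ENNReal.ofReal ((∫ x, Fn n x ∂ν) / c) := by
      have e1 : ∫⁻ ω, Ln n ω ∂P = ∫⁻ ω, ENNReal.ofReal (∫ x, Fn n x ∂(Q ω)) ∂P :=
        lintegral_congr fun ω => hLn_eq n ω
      rw [e1, ← ofReal_integral_eq_lintegral_ofReal (hhn_int n)
        (ae_of_all _ fun ω => integral_nonneg fun x => le_trans zero_le_one (hFn_one n x)),
        hmean_n n]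
    rw [h1]
    refine ENNReal.ofReal_le_ofReal ?_
    gcongr ?_ / _
    exact integral_mono (hFn_int ν n) hInt fun x => hFn_le_F n x
  -- conclude
  rw [integral_eq_lintegral_of_nonneg_ae (ae_of_all _ fun ω => (Real.exp_pos _).le)
    hLint.aestronglyMeasurable]
  have hb : ∫⁻ ω, ENNReal.ofReal (Real.exp (t * ∫ x, G x ∂(Q ω))) ∂P
      ≤ ENNReal.ofReal ((∫ x, F x ∂ν) / c) := (lintegral_mono hpt).trans key
  calc (∫⁻ ω, ENNReal.ofReal (Real.exp (t * ∫ x, G x ∂(Q ω))) ∂P).toReal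
      ≤ (ENNReal.ofReal ((∫ x, F x ∂ν) / c)).toReal :=
        ENNReal.toReal_mono ENNReal.ofReal_ne_top hb
    _ = (∫ x, F x ∂ν) / c := ENNReal.toReal_ofReal hRHS_nonneg
end
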